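/- Fix R1, R2 ≥ 0, pmfs Q1 on 𝒳1 and Q2 on 𝒳2, and a channel q1 with q1(y|x1,x2) > 0 for all arguments, and let P* be the joint pmf on 𝒳1×𝒳2×𝒴1 given by P*(x1,x2,y) = Q1(x1)·Q2(x2)·q1(y|x1,x2). If R1 < I(X̂1;Ŷ1) + |I(X̂2;Ŷ1|X̂1) − R2|⁺ and R1 < I(X̂1;Ŷ1|X̂2), where all information quantities are computed under P*, then sup_{(ρ,λ)∈[0,1]²} E_{R,1}(R1, R2, Q1, Q2, ρ, λ) > 0. -/

import Mathlib

open Finset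

set_option linter.unusedSectionVars false
set_option linter.unnecessarySeqFocus false

section InfoDefs

variable {Ω : Type*} [Fintype Ω]

/-- A probability mass function on a finite type. -/
def IsPMF {α : Type*} [Fintype α] (p : α → ℝ) : Prop :=
  (∀ a, 0 ≤ p a) ∧ ∑ a, p a = 1

/-- Pushforward of `P` along `f` (the pmf of the random variable `f`). -/
noncomputable def pushf {α : Type*} [Fintype α] [DecidableEq α]
    (P : Ω → ℝ) (f : Ω → α) (a : α) : ℝ :=
  ∑ ω, if f ω = a then P ω else 0

/-- Entropy of the random variable `f` under `P`. -/
noncomputable def entH {α : Type*} [Fintype α] [DecidableEq α]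
    (P : Ω → ℝ) (f : Ω → α) : ℝ :=
  -∑ a, pushf P f a * Real.log (pushf P f a)

/-- Conditional entropy `H(g | f)` under `P`. -/
noncomputable def condEnt {α β : Type*} [Fintype α] [DecidableEq α] [Fintype β] [DecidableEq β]
    (P : Ω → ℝ) (f : Ω → α) (g : Ω → β) : ℝ :=
  -∑ a, ∑ b, pushf P (fun ω => (f ω, g ω)) (a, b) *
      Real.log (pushf P (fun ω => (f ω, g ω)) (a, b) / pushf P f a)

/-- Mutual information `I(f;g)` under `P`. -/
noncomputable def mutI {α β : Type*} [Fintype α] [DecidableEq α] [Fintype β] [DecidableEq β]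
    (P : Ω → ℝ) (f : Ω → α) (g : Ω → β) : ℝ :=
  ∑ a, ∑ b, pushf P (fun ω => (f ω, g ω)) (a, b) *
      Real.log (pushf P (fun ω => (f ω, g ω)) (a, b) / (pushf P f a * pushf P g b))

/-- Conditional mutual information `I(f;g|h)` under `P`. -/
noncomputable def condMutI {α β γ : Type*} [Fintype α] [DecidableEq α] [Fintype β]
    [DecidableEq β] [Fintype γ] [DecidableEq γ]
    (P : Ω → ℝ) (f : Ω → α) (g : Ω → β) (h : Ω → γ) : ℝ :=
  ∑ a, ∑ b, ∑ c, pushf P (fun ω => (f ω, g ω, h ω)) (a, b, c) *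
      Real.log (pushf P (fun ω => (f ω, g ω, h ω)) (a, b, c) * pushf P h c /
        (pushf P (fun ω => (f ω, h ω)) (a, c) * pushf P (fun ω => (g ω, h ω)) (b, c)))

end InfoDefs

section GenLemmas

variable {Ω : Type*} [Fintype Ω]

section Lemmas

variable {α β γ : Type*} [Fintype α] [DecidableEq α] [Fintype β] [DecidableEq β]
  [Fintype γ] [DecidableEq γ] {P : Ω → ℝ} {f : Ω → α} {g : Ω → β} {h : Ω → γ}

lemma pushf_nonneg (hP : ∀ ω, 0 ≤ P ω) (a : α) : 0 ≤ pushf P f a := by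
  apply Finset.sum_nonneg; intro ω _
  by_cases h : f ω = a <;> simp [h, hP ω]

lemma pushf_sum (φ : α → ℝ) :
    ∑ a, pushf P f a * φ a = ∑ ω, P ω * φ (f ω) := by
  unfold pushf
  simp only [Finset.sum_mul, ite_mul, zero_mul]
  rw [Finset.sum_comm]
  refine Finset.sum_congr rfl fun ω _ => ?_
  simp

lemma pushf_id [DecidableEq Ω] (a : Ω) : pushf P (fun ω => ω) a = P a := by
  unfold pushf; simp

lemma le_pushf (hP : ∀ ω, 0 ≤ P ω) (ω : Ω) : P ω ≤ pushf P f (f ω) := by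
  unfold pushf
  have := Finset.single_le_sum (f := fun ω' => if f ω' = f ω then P ω' else 0)
    (fun ω' _ => by by_cases h : f ω' = f ω <;> simp [h, hP ω'])
    (Finset.mem_univ ω)
  simpa using this


lemma entH_toSum : entH P f = ∑ ω, P ω * (-(Real.log (pushf P f (f ω)))) := by
  rw [← pushf_sum (φ := fun a => -(Real.log (pushf P f a)))]
  simp [entH, mul_neg, ← Finset.sum_neg_distrib]

lemma pushf_comp_equiv (e : α ≃ β) (a : α) :
    pushf P (fun ω => e (f ω)) (e a) = pushf P f a := by
  unfold pushf
  refine Finset.sum_congr rfl fun ω _ => ?_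
  simp [Equiv.apply_eq_iff_eq]

lemma entH_comp_equiv (e : α ≃ β) : entH P (fun ω => e (f ω)) = entH P f := by
  unfold entH
  rw [← Equiv.sum_comp e (fun b => pushf P (fun ω => e (f ω)) b *
    Real.log (pushf P (fun ω => e (f ω)) b))]
  refine congrArg _ (Finset.sum_congr rfl fun a _ => ?_)
  rw [pushf_comp_equiv]

lemma mutI_eq (hP : ∀ ω, 0 ≤ P ω) :
    mutI P f g = entH P f + entH P g - entH P (fun ω => (f ω, g ω)) := by
  have hL : mutI P f g = ∑ ω, P ω *
      Real.log (pushf P (fun ω => (f ω, g ω)) (f ω, g ω) /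
        (pushf P f (f ω) * pushf P g (g ω))) := by
    rw [← pushf_sum (f := fun ω => (f ω, g ω))
      (φ := fun c => Real.log (pushf P (fun ω => (f ω, g ω)) c /
        (pushf P f c.1 * pushf P g c.2))), mutI]
    simp [Fintype.sum_prod_type]
  rw [hL, entH_toSum (f := f), entH_toSum (f := g),
    entH_toSum (f := fun ω => (f ω, g ω)), ← Finset.sum_add_distrib,
    ← Finset.sum_sub_distrib]
  refine Finset.sum_congr rfl fun ω _ => ?_
  rcases eq_or_lt_of_le (hP ω) with h0 | h0
  · simp [← h0]
  · have h1 : 0 < pushf P f (f ω) := lt_of_lt_of_le h0 (le_pushf hP ω)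
    have h2 : 0 < pushf P g (g ω) := lt_of_lt_of_le h0 (le_pushf hP ω)
    have h3 : 0 < pushf P (fun ω => (f ω, g ω)) (f ω, g ω) :=
      lt_of_lt_of_le h0 (le_pushf hP ω)
    rw [Real.log_div h3.ne' (mul_pos h1 h2).ne', Real.log_mul h1.ne' h2.ne']
    ring

lemma condEnt_eq (hP : ∀ ω, 0 ≤ P ω) :
    condEnt P f g = entH P (fun ω => (f ω, g ω)) - entH P f := by
  have hL : condEnt P f g = ∑ ω, P ω *
      (-(Real.log (pushf P (fun ω => (f ω, g ω)) (f ω, g ω) / pushf P f (f ω)))) := by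
    rw [← pushf_sum (f := fun ω => (f ω, g ω))
        (φ := fun c => -(Real.log (pushf P (fun ω => (f ω, g ω)) c / pushf P f c.1))),
      condEnt]
    simp [Fintype.sum_prod_type, mul_neg, ← Finset.sum_neg_distrib]
  rw [hL, entH_toSum (f := f), entH_toSum (f := fun ω => (f ω, g ω)),
    ← Finset.sum_sub_distrib]
  refine Finset.sum_congr rfl fun ω _ => ?_
  rcases eq_or_lt_of_le (hP ω) with h0 | h0
  · simp [← h0]
  · have h1 : 0 < pushf P f (f ω) := lt_of_lt_of_le h0 (le_pushf hP ω)
    have h3 : 0 < pushf P (fun ω => (f ω, g ω)) (f ω, g ω) :=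
      lt_of_lt_of_le h0 (le_pushf hP ω)
    rw [Real.log_div h3.ne' h1.ne']
    ring

lemma condMutI_eq (hP : ∀ ω, 0 ≤ P ω) :
    condMutI P f g h = entH P (fun ω => (f ω, h ω)) + entH P (fun ω => (g ω, h ω))
      - entH P (fun ω => (f ω, g ω, h ω)) - entH P h := by
  have hL : condMutI P f g h = ∑ ω, P ω *
      Real.log (pushf P (fun ω => (f ω, g ω, h ω)) (f ω, g ω, h ω) * pushf P h (h ω) /
        (pushf P (fun ω => (f ω, h ω)) (f ω, h ω) *
          pushf P (fun ω => (g ω, h ω)) (g ω, h ω))) := by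
    rw [← pushf_sum (f := fun ω => (f ω, g ω, h ω))
      (φ := fun t => Real.log (pushf P (fun ω => (f ω, g ω, h ω)) t * pushf P h t.2.2 /
        (pushf P (fun ω => (f ω, h ω)) (t.1, t.2.2) *
          pushf P (fun ω => (g ω, h ω)) (t.2.1, t.2.2)))), condMutI]
    simp [Fintype.sum_prod_type]
  rw [hL, entH_toSum (f := h), entH_toSum (f := fun ω => (f ω, h ω)),
    entH_toSum (f := fun ω => (g ω, h ω)), entH_toSum (f := fun ω => (f ω, g ω, h ω)),
    ← Finset.sum_add_distrib, ← Finset.sum_sub_distrib, ← Finset.sum_sub_distrib]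
  refine Finset.sum_congr rfl fun ω _ => ?_
  rcases eq_or_lt_of_le (hP ω) with h0 | h0
  · simp [← h0]
  · have h1 : 0 < pushf P (fun ω => (f ω, h ω)) (f ω, h ω) :=
      lt_of_lt_of_le h0 (le_pushf hP ω)
    have h2 : 0 < pushf P (fun ω => (g ω, h ω)) (g ω, h ω) :=
      lt_of_lt_of_le h0 (le_pushf hP ω)
    have h3 : 0 < pushf P (fun ω => (f ω, g ω, h ω)) (f ω, g ω, h ω) :=
      lt_of_lt_of_le h0 (le_pushf hP ω)
    have h4 : 0 < pushf P h (h ω) := lt_of_lt_of_le h0 (le_pushf hP ω)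
    rw [Real.log_div (mul_pos h3 h4).ne' (mul_pos h1 h2).ne',
      Real.log_mul h3.ne' h4.ne', Real.log_mul h1.ne' h2.ne']
    ring


lemma continuous_pushf (f : Ω → α) (a : α) :
    Continuous fun P : Ω → ℝ => pushf P f a := by
  unfold pushf
  refine continuous_finset_sum _ fun ω _ => ?_
  by_cases h : f ω = a
  · simpa [h] using continuous_apply (A := fun _ : Ω => ℝ) ω
  · simp only [h, if_false]
    exact continuous_const

lemma continuous_entH (f : Ω → α) : Continuous fun P : Ω → ℝ => entH P f := by
  unfold entH
  refine (continuous_finset_sum _ fun a _ => ?_).neg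
  exact Real.continuous_mul_log.comp (continuous_pushf f a)

end Lemmas

section Gibbs

variable {P Q : Ω → ℝ}

lemma gibbs_aux (hP : IsPMF P) (hQ : IsPMF Q) (hsupp : ∀ ω, Q ω = 0 → P ω = 0) :
    (∀ ω, P ω - (if P ω = 0 then 0 else Q ω) ≤ P ω * (Real.log (P ω) - Real.log (Q ω)))
    ∧ 0 ≤ ∑ ω, (P ω - (if P ω = 0 then 0 else Q ω)) := by
  constructor
  · intro ω
    by_cases h0 : P ω = 0
    · simp [h0]
    · have hp : 0 < P ω := lt_of_le_of_ne (hP.1 ω) (Ne.symm h0)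
      have hq : 0 < Q ω := lt_of_le_of_ne (hQ.1 ω) (fun h => h0 (hsupp ω h.symm))
      have hlog : Real.log (Q ω / P ω) ≤ Q ω / P ω - 1 :=
        Real.log_le_sub_one_of_pos (div_pos hq hp)
      rw [Real.log_div hq.ne' hp.ne'] at hlog
      have h5 := mul_le_mul_of_nonneg_left hlog (le_of_lt hp)
      have hdiv : P ω * (Q ω / P ω - 1) = Q ω - P ω := by field_simp
      have hr : P ω * (Real.log (P ω) - Real.log (Q ω))
          = -(P ω * (Real.log (Q ω) - Real.log (P ω))) := by ring
      rw [if_neg h0, hr]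
      rw [hdiv] at h5
      linarith
  · have h1 : ∑ ω, (if P ω = 0 then 0 else Q ω) ≤ ∑ ω, Q ω := by
      refine Finset.sum_le_sum fun ω _ => ?_
      by_cases h : P ω = 0 <;> simp [h, hQ.1 ω]
    rw [Finset.sum_sub_distrib, hP.2]
    rw [hQ.2] at h1
    linarith

lemma gibbs_nonneg (hP : IsPMF P) (hQ : IsPMF Q) (hsupp : ∀ ω, Q ω = 0 → P ω = 0) :
    0 ≤ ∑ ω, P ω * (Real.log (P ω) - Real.log (Q ω)) := by
  obtain ⟨key, base⟩ := gibbs_aux hP hQ hsupp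
  calc (0:ℝ) ≤ ∑ ω, (P ω - (if P ω = 0 then 0 else Q ω)) := base
  _ ≤ _ := Finset.sum_le_sum fun ω _ => key ω

lemma gibbs_pos (hP : IsPMF P) (hQ : IsPMF Q) (hsupp : ∀ ω, Q ω = 0 → P ω = 0)
    (hne : P ≠ Q) : 0 < ∑ ω, P ω * (Real.log (P ω) - Real.log (Q ω)) := by
  obtain ⟨key, base⟩ := gibbs_aux hP hQ hsupp
  obtain ⟨ω0, hω0⟩ := Function.ne_iff.mp hne
  by_cases h0 : P ω0 = 0
  · -- then Q ω0 > 0 and the base sum is strictly positive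
    have hq : 0 < Q ω0 := lt_of_le_of_ne (hQ.1 ω0) (fun h => hω0 (h0.trans h))
    have hbase : 0 < ∑ ω, (P ω - (if P ω = 0 then 0 else Q ω)) := by
      have h1 : ∑ ω, (if P ω = 0 then 0 else Q ω) ≤ ∑ ω, Q ω - Q ω0 := by
        classical
        have : ∑ ω, (if P ω = 0 then 0 else Q ω)
            = ∑ ω ∈ Finset.univ.erase ω0, (if P ω = 0 then 0 else Q ω) := by
          rw [← Finset.sum_erase_add _ _ (Finset.mem_univ ω0), if_pos h0, add_zero]
        rw [this]
        have h2 : ∑ ω ∈ Finset.univ.erase ω0, (if P ω = 0 then 0 else Q ω)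
            ≤ ∑ ω ∈ Finset.univ.erase ω0, Q ω := by
          refine Finset.sum_le_sum fun ω _ => ?_
          by_cases h : P ω = 0 <;> simp [h, hQ.1 ω]
        have h3 : ∑ ω ∈ Finset.univ.erase ω0, Q ω = ∑ ω, Q ω - Q ω0 := by
          rw [← Finset.sum_erase_add _ _ (Finset.mem_univ ω0)]; ring
        linarith
      rw [Finset.sum_sub_distrib, hP.2]
      rw [hQ.2] at h1
      linarith
    calc (0:ℝ) < ∑ ω, (P ω - (if P ω = 0 then 0 else Q ω)) := hbase
    _ ≤ _ := Finset.sum_le_sum fun ω _ => key ω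
  · have hp : 0 < P ω0 := lt_of_le_of_ne (hP.1 ω0) (Ne.symm h0)
    have hq : 0 < Q ω0 := lt_of_le_of_ne (hQ.1 ω0) (fun h => h0 (hsupp ω0 h.symm))
    have hstrict : P ω0 - (if P ω0 = 0 then 0 else Q ω0)
        < P ω0 * (Real.log (P ω0) - Real.log (Q ω0)) := by
      have hne1 : Q ω0 / P ω0 ≠ 1 := by
        intro h
        rw [div_eq_one_iff_eq hp.ne'] at h
        exact hω0 h.symm
      have hlog : Real.log (Q ω0 / P ω0) < Q ω0 / P ω0 - 1 :=
        Real.log_lt_sub_one_of_pos (div_pos hq hp) hne1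
      rw [Real.log_div hq.ne' hp.ne'] at hlog
      have h5 := mul_lt_mul_of_pos_left hlog hp
      have hdiv : P ω0 * (Q ω0 / P ω0 - 1) = Q ω0 - P ω0 := by field_simp
      have hr : P ω0 * (Real.log (P ω0) - Real.log (Q ω0))
          = -(P ω0 * (Real.log (Q ω0) - Real.log (P ω0))) := by ring
      rw [if_neg h0, hr]
      rw [hdiv] at h5
      linarith
    have : ∑ ω, (P ω - (if P ω = 0 then 0 else Q ω))
        < ∑ ω, P ω * (Real.log (P ω) - Real.log (Q ω)) :=
      Finset.sum_lt_sum (fun ω _ => key ω) ⟨ω0, Finset.mem_univ ω0, hstrict⟩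
    linarith

end Gibbs

end GenLemmas

section IFC

variable {X1 X2 Y1 : Type*} [Fintype X1] [DecidableEq X1] [Fintype X2] [DecidableEq X2]
  [Fintype Y1] [DecidableEq Y1]

/-- The function `g(ρ,λ,P,P')`. -/
noncomputable def gFun (q1 : X1 → X2 → Y1 → ℝ) (ρ lam : ℝ)
    (P P' : X1 × X2 × Y1 → ℝ) : ℝ :=
  -(1 - ρ * lam) * (∑ z, P z * Real.log (q1 z.1 z.2.1 z.2.2))
    - ρ * lam * (∑ z, P' z * Real.log (q1 z.1 z.2.1 z.2.2))

/-- The function `f1(ρ,λ,P,P')`. -/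
noncomputable def f1Fun (q1 : X1 → X2 → Y1 → ℝ) (R2 ρ lam : ℝ)
    (P P' : X1 × X2 × Y1 → ℝ) : ℝ :=
  gFun q1 ρ lam P P'
    - condEnt P (fun z => z.1) (fun z => z.2.2)
    + ρ * mutI P' (fun z => z.1) (fun z => z.2.2)
    + max (mutI P (fun z => z.2.1) (fun z => (z.1, z.2.2)) - R2)
        ((1 - ρ * lam) * (mutI P (fun z => z.2.1) (fun z => (z.1, z.2.2)) - R2))
    + max (max ((1 - ρ) * mutI P' (fun z => z.2.1) (fun z => z.2.2)
            + ρ * mutI P' (fun z => z.2.1) (fun z => (z.1, z.2.2)) - R2)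
          (ρ * (mutI P' (fun z => z.2.1) (fun z => (z.1, z.2.2)) - R2)))
        (ρ * lam * (mutI P' (fun z => z.2.1) (fun z => (z.1, z.2.2)) - R2))

/-- The function `f2(ρ,λ,P,P')`. -/
noncomputable def f2Fun (q1 : X1 → X2 → Y1 → ℝ) (R2 ρ lam : ℝ)
    (P P' : X1 × X2 × Y1 → ℝ) : ℝ :=
  gFun q1 ρ lam P P'
    - condEnt P (fun z => z.1) (fun z => z.2.2)
    + ρ * mutI P' (fun z => z.1) (fun z => (z.2.1, z.2.2))
    + mutI P (fun z => z.2.1) (fun z => (z.1, z.2.2)) - R2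

/-- The constraint set `S1(Q1,Q2)`. -/
def S1set (Y1 : Type*) [Fintype Y1] [DecidableEq Y1] (Q1 : X1 → ℝ) (Q2 : X2 → ℝ) :
    Set ((X1 × X2 × Y1 → ℝ) × (X1 × X2 × Y1 → ℝ)) :=
  {PP | IsPMF PP.1 ∧ IsPMF PP.2 ∧
    pushf PP.1 (fun z => z.2.2) = pushf PP.2 (fun z => z.2.2) ∧
    pushf PP.1 (fun z => z.1) = Q1 ∧ pushf PP.2 (fun z => z.1) = Q1 ∧
    pushf PP.1 (fun z => z.2.1) = Q2 ∧ pushf PP.2 (fun z => z.2.1) = Q2}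

/-- The constraint set `S2(Q1,Q2,R2)`. -/
def S2set (Y1 : Type*) [Fintype Y1] [DecidableEq Y1] (Q1 : X1 → ℝ) (Q2 : X2 → ℝ) (R2 : ℝ) :
    Set ((X1 × X2 × Y1 → ℝ) × (X1 × X2 × Y1 → ℝ)) :=
  {PP | IsPMF PP.1 ∧ IsPMF PP.2 ∧
    pushf PP.1 (fun z => z.1) = Q1 ∧ pushf PP.2 (fun z => z.1) = Q1 ∧
    pushf PP.1 (fun z => z.2.1) = Q2 ∧ pushf PP.2 (fun z => z.2.1) = Q2 ∧
    R2 ≤ mutI PP.1 (fun z => z.2.1) (fun z => z.2.2) ∧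
    pushf PP.1 (fun z => (z.2.1, z.2.2)) = pushf PP.2 (fun z => (z.2.1, z.2.2))}

/-- The error exponent `E_{R,1}(R1,R2,Q1,Q2,ρ,λ)` (with `+∞` for infima over empty sets). -/
noncomputable def ER1 (q1 : X1 → X2 → Y1 → ℝ) (R1 R2 : ℝ) (Q1 : X1 → ℝ) (Q2 : X2 → ℝ)
    (ρ lam : ℝ) : EReal :=
  ((R2 - ρ * R1 : ℝ) : EReal) +
    min (⨅ PP : S1set Y1 Q1 Q2, ((f1Fun q1 R2 ρ lam PP.1.1 PP.1.2 : ℝ) : EReal))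
        (⨅ PP : S2set Y1 Q1 Q2 R2, ((f2Fun q1 R2 ρ lam PP.1.1 PP.1.2 : ℝ) : EReal))

end IFC

namespace ST18

variable {X1 X2 Y1 : Type*} [Fintype X1] [DecidableEq X1] [Fintype X2] [DecidableEq X2]
  [Fintype Y1] [DecidableEq Y1]

noncomputable def e1 (P : X1 × X2 × Y1 → ℝ) : ℝ := entH P (fun z => z.1)
noncomputable def e2 (P : X1 × X2 × Y1 → ℝ) : ℝ := entH P (fun z => z.2.1)
noncomputable def e3 (P : X1 × X2 × Y1 → ℝ) : ℝ := entH P (fun z => z.2.2)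
noncomputable def e12 (P : X1 × X2 × Y1 → ℝ) : ℝ := entH P (fun z => (z.1, z.2.1))
noncomputable def e13 (P : X1 × X2 × Y1 → ℝ) : ℝ := entH P (fun z => (z.1, z.2.2))
noncomputable def e23 (P : X1 × X2 × Y1 → ℝ) : ℝ := entH P (fun z => (z.2.1, z.2.2))
noncomputable def eF (P : X1 × X2 × Y1 → ℝ) : ℝ := entH P (fun z => z)

def eqvA : X1 × X2 × Y1 ≃ X2 × Y1 × X1 :=
  ⟨fun z => (z.2.1, z.2.2, z.1), fun w => (w.2.2, w.1, w.2.1), fun _ => rfl, fun _ => rfl⟩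
def eqvB : X1 × X2 × Y1 ≃ X1 × Y1 × X2 :=
  ⟨fun z => (z.1, z.2.2, z.2.1), fun w => (w.1, w.2.2, w.2.1), fun _ => rfl, fun _ => rfl⟩
def eqvC : X1 × X2 × Y1 ≃ X2 × X1 × Y1 :=
  ⟨fun z => (z.2.1, z.1, z.2.2), fun w => (w.2.1, w.1, w.2.2), fun _ => rfl, fun _ => rfl⟩

variable {P P' : X1 × X2 × Y1 → ℝ}

@[simp] lemma eqvA_apply (z : X1 × X2 × Y1) : eqvA z = (z.2.1, z.2.2, z.1) := rfl
@[simp] lemma eqvB_apply (z : X1 × X2 × Y1) : eqvB z = (z.1, z.2.2, z.2.1) := rfl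
@[simp] lemma eqvC_apply (z : X1 × X2 × Y1) : eqvC z = (z.2.1, z.1, z.2.2) := rfl

lemma entH_congr {α : Type*} [Fintype α] [DecidableEq α] {f : X1 × X2 × Y1 → α}
    (h : pushf P f = pushf P' f) : entH P f = entH P' f := by unfold entH; rw [h]

lemma entH_A : entH P (fun z => (z.2.1, z.2.2, z.1)) = eF P := by
  have h := entH_comp_equiv (P := P) (f := fun z : X1 × X2 × Y1 => z) (e := eqvA)
  simpa only [eqvA_apply, eF] using h
lemma entH_B : entH P (fun z => (z.1, z.2.2, z.2.1)) = eF P := by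
  have h := entH_comp_equiv (P := P) (f := fun z : X1 × X2 × Y1 => z) (e := eqvB)
  simpa only [eqvB_apply, eF] using h
lemma entH_C : entH P (fun z => (z.2.1, z.1, z.2.2)) = eF P := by
  have h := entH_comp_equiv (P := P) (f := fun z : X1 × X2 × Y1 => z) (e := eqvC)
  simpa only [eqvC_apply, eF] using h
lemma entH_sw12 : entH P (fun z => (z.2.1, z.1)) = e12 P := by
  have h := entH_comp_equiv (P := P) (f := fun z : X1 × X2 × Y1 => (z.1, z.2.1))
    (e := Equiv.prodComm X1 X2)
  simpa only [Equiv.prodComm_apply, Prod.swap_prod_mk, e12] using h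
lemma entH_sw13 : entH P (fun z => (z.2.2, z.1)) = e13 P := by
  have h := entH_comp_equiv (P := P) (f := fun z : X1 × X2 × Y1 => (z.1, z.2.2))
    (e := Equiv.prodComm X1 Y1)
  simpa only [Equiv.prodComm_apply, Prod.swap_prod_mk, e13] using h
lemma entH_sw23 : entH P (fun z => (z.2.2, z.2.1)) = e23 P := by
  have h := entH_comp_equiv (P := P) (f := fun z : X1 × X2 × Y1 => (z.2.1, z.2.2))
    (e := Equiv.prodComm X2 Y1)
  simpa only [Equiv.prodComm_apply, Prod.swap_prod_mk, e23] using h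

variable (hP : ∀ z, 0 ≤ P z)
include hP

lemma mutI13_eq : mutI P (fun z => z.1) (fun z => z.2.2) = e1 P + e3 P - e13 P := by
  rw [mutI_eq hP]; rfl

lemma mutI23_eq : mutI P (fun z => z.2.1) (fun z => z.2.2) = e2 P + e3 P - e23 P := by
  rw [mutI_eq hP]; rfl

lemma mutI12_eq : mutI P (fun z => z.1) (fun z => z.2.1) = e1 P + e2 P - e12 P := by
  rw [mutI_eq hP]; rfl

lemma mutI2_13_eq : mutI P (fun z => z.2.1) (fun z => (z.1, z.2.2))
    = e2 P + e13 P - eF P := by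
  rw [mutI_eq hP, entH_C]; rfl

lemma mutI1_23_eq : mutI P (fun z => z.1) (fun z => (z.2.1, z.2.2))
    = e1 P + e23 P - eF P := by
  rw [mutI_eq hP]; rfl

lemma condEnt13_eq : condEnt P (fun z => z.1) (fun z => z.2.2) = e13 P - e1 P := by
  rw [condEnt_eq hP]; rfl

lemma condMutI231_eq : condMutI P (fun z => z.2.1) (fun z => z.2.2) (fun z => z.1)
    = e12 P + e13 P - eF P - e1 P := by
  rw [condMutI_eq hP, entH_A, entH_sw12, entH_sw13]; rfl

lemma condMutI132_eq : condMutI P (fun z => z.1) (fun z => z.2.2) (fun z => z.2.1)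
    = e12 P + e23 P - eF P - e2 P := by
  rw [condMutI_eq hP, entH_B, entH_sw23]; rfl

end ST18

namespace ST18

variable {X1 X2 Y1 : Type*} [Fintype X1] [DecidableEq X1] [Fintype X2] [DecidableEq X2]
  [Fintype Y1] [DecidableEq Y1]

/-- The product pmf `Q1 ⊗ Q2 ⊗ q1`. -/
def Pst (q1 : X1 → X2 → Y1 → ℝ) (Q1 : X1 → ℝ) (Q2 : X2 → ℝ) : X1 × X2 × Y1 → ℝ :=
  fun z => Q1 z.1 * Q2 z.2.1 * q1 z.1 z.2.1 z.2.2

def Kset (Q1 : X1 → ℝ) (Q2 : X2 → ℝ) : Set (X1 × X2 × Y1 → ℝ) :=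
  {P | IsPMF P ∧ pushf P (fun z => z.1) = Q1 ∧ pushf P (fun z => z.2.1) = Q2}

noncomputable def dD (q1 : X1 → X2 → Y1 → ℝ) (Q1 : X1 → ℝ) (Q2 : X2 → ℝ)
    (P : X1 × X2 × Y1 → ℝ) : ℝ :=
  ∑ z, P z * (Real.log (P z) - Real.log (Pst q1 Q1 Q2 z))

noncomputable def phi1 (R2 : ℝ) (P : X1 × X2 × Y1 → ℝ) : ℝ :=
  (e1 P + e3 P - e13 P) + max (e2 P + e13 P - eF P - R2) 0

noncomputable def phi2 (P : X1 × X2 × Y1 → ℝ) : ℝ := e1 P + e23 P - eF P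

variable {q1 : X1 → X2 → Y1 → ℝ} {Q1 : X1 → ℝ} {Q2 : X2 → ℝ}

section PstFacts

variable (hq_pos : ∀ x1 x2 y, 0 < q1 x1 x2 y) (hq_sum : ∀ x1 x2, ∑ y, q1 x1 x2 y = 1)
  (hQ1 : IsPMF Q1) (hQ2 : IsPMF Q2)

include hq_pos hQ1 hQ2 in
lemma pst_nonneg : ∀ z, 0 ≤ Pst q1 Q1 Q2 z := by
  intro z
  exact mul_nonneg (mul_nonneg (hQ1.1 _) (hQ2.1 _)) (hq_pos _ _ _).le

include hq_sum hQ2 in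
lemma pst_inner (x1 : X1) :
    ∑ p : X2 × Y1, Q1 x1 * Q2 p.1 * q1 x1 p.1 p.2 = Q1 x1 := by
  rw [Fintype.sum_prod_type]
  have h : ∀ x2 : X2, ∑ y, Q1 x1 * Q2 x2 * q1 x1 x2 y = Q1 x1 * Q2 x2 := by
    intro x2
    rw [← Finset.mul_sum, hq_sum x1 x2, mul_one]
  rw [Finset.sum_congr rfl fun x2 _ => h x2, ← Finset.mul_sum, hQ2.2, mul_one]

include hq_pos hq_sum hQ1 hQ2 in
lemma pst_pmf : IsPMF (Pst q1 Q1 Q2) := by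
  refine ⟨pst_nonneg hq_pos hQ1 hQ2, ?_⟩
  rw [show (Pst q1 Q1 Q2) = fun z => Q1 z.1 * Q2 z.2.1 * q1 z.1 z.2.1 z.2.2 from rfl]
  rw [Fintype.sum_prod_type]
  rw [Finset.sum_congr rfl fun x1 _ => pst_inner hq_sum hQ2 x1]
  exact hQ1.2

include hq_sum hQ2 in
lemma pst_m1 : pushf (Pst q1 Q1 Q2) (fun z => z.1) = Q1 := by
  funext a
  unfold pushf Pst
  rw [Fintype.sum_prod_type]
  have h1 : ∀ x1 : X1,
      (∑ p : X2 × Y1, if x1 = a then Q1 x1 * Q2 p.1 * q1 x1 p.1 p.2 else 0)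
      = if x1 = a then Q1 x1 else 0 := by
    intro x1
    split
    · exact pst_inner hq_sum hQ2 x1
    · simp
  rw [Finset.sum_congr rfl fun x1 _ => h1 x1, Finset.sum_ite_eq' Finset.univ a Q1]
  simp

include hq_sum hQ1 in
lemma pst_m2 : pushf (Pst q1 Q1 Q2) (fun z => z.2.1) = Q2 := by
  funext b
  unfold pushf Pst
  rw [Fintype.sum_prod_type]
  have h1 : ∀ x1 : X1,
      (∑ p : X2 × Y1, if p.1 = b then Q1 x1 * Q2 p.1 * q1 x1 p.1 p.2 else 0)
      = Q1 x1 * Q2 b := by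
    intro x1
    rw [Fintype.sum_prod_type]
    have h2 : ∀ x2 : X2, (∑ y, if x2 = b then Q1 x1 * Q2 x2 * q1 x1 x2 y else 0)
        = if x2 = b then Q1 x1 * Q2 x2 else 0 := by
      intro x2
      split
      · rw [← Finset.mul_sum, hq_sum x1 x2, mul_one]
      · simp
    rw [Finset.sum_congr rfl fun x2 _ => h2 x2,
      Finset.sum_ite_eq' Finset.univ b (fun x2 => Q1 x1 * Q2 x2)]
    simp
  rw [Finset.sum_congr rfl fun x1 _ => h1 x1, ← Finset.sum_mul, hQ1.2, one_mul]

include hq_sum in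
lemma pst_m12 : pushf (Pst q1 Q1 Q2) (fun z => (z.1, z.2.1))
    = fun c => Q1 c.1 * Q2 c.2 := by
  funext c
  obtain ⟨a, b⟩ := c
  unfold pushf Pst
  rw [Fintype.sum_prod_type]
  have h1 : ∀ x1 : X1,
      (∑ p : X2 × Y1, if (x1, p.1) = (a, b) then Q1 x1 * Q2 p.1 * q1 x1 p.1 p.2 else 0)
      = if x1 = a then Q1 x1 * Q2 b else 0 := by
    intro x1
    rw [Fintype.sum_prod_type]
    have h2 : ∀ x2 : X2, (∑ y, if (x1, x2) = (a, b) then Q1 x1 * Q2 x2 * q1 x1 x2 y else 0)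
        = if x1 = a then (if x2 = b then Q1 x1 * Q2 x2 else 0) else 0 := by
      intro x2
      by_cases hx1 : x1 = a <;> by_cases hx2 : x2 = b <;>
        simp [hx1, hx2, ← Finset.mul_sum, hq_sum]
    rw [Finset.sum_congr rfl fun x2 _ => h2 x2]
    split
    · rw [Finset.sum_ite_eq' Finset.univ b (fun x2 => Q1 x1 * Q2 x2)]
      simp
    · simp
  rw [Finset.sum_congr rfl fun x1 _ => h1 x1, Finset.sum_ite_eq' Finset.univ a
    (fun x1 => Q1 x1 * Q2 b)]
  simp

include hq_pos hq_sum hQ1 hQ2 in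
lemma pst_mem_K : Pst q1 Q1 Q2 ∈ Kset Q1 Q2 :=
  ⟨pst_pmf hq_pos hq_sum hQ1 hQ2, pst_m1 hq_sum hQ2, pst_m2 hq_sum hQ1⟩

include hq_sum hQ1 hQ2 in
lemma mutI12_pst : mutI (Pst q1 Q1 Q2) (fun z => z.1) (fun z => z.2.1) = 0 := by
  unfold mutI
  rw [pst_m12 hq_sum, pst_m1 hq_sum hQ2, pst_m2 hq_sum hQ1]
  refine Finset.sum_eq_zero fun a _ => Finset.sum_eq_zero fun b _ => ?_
  by_cases h : Q1 a * Q2 b = 0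
  · simp [h]
  · simp only []
    rw [div_self h, Real.log_one, mul_zero]

include hq_pos hq_sum hQ1 hQ2 in
lemma e12_pst : e12 (Pst q1 Q1 Q2) = e1 (Pst q1 Q1 Q2) + e2 (Pst q1 Q1 Q2) := by
  have h0 := mutI12_pst hq_sum hQ1 hQ2 (q1 := q1)
  have h1 := mutI12_eq (pst_nonneg hq_pos hQ1 hQ2 (q1 := q1))
  rw [h0] at h1
  linarith

end PstFacts

section Main

variable (hq_pos : ∀ x1 x2 y, 0 < q1 x1 x2 y) (hq_sum : ∀ x1 x2, ∑ y, q1 x1 x2 y = 1)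
  (hQ1 : IsPMF Q1) (hQ2 : IsPMF Q2) {P P' : X1 × X2 × Y1 → ℝ}

include hq_pos in
lemma pst_supp (hP : P ∈ Kset Q1 Q2) : ∀ z, Pst q1 Q1 Q2 z = 0 → P z = 0 := by
  intro z hz
  have hq := (hq_pos z.1 z.2.1 z.2.2).ne'
  have hor : Q1 z.1 = 0 ∨ Q2 z.2.1 = 0 := by
    rcases mul_eq_zero.mp hz with h | h
    · rcases mul_eq_zero.mp h with h | h
      · exact Or.inl h
      · exact Or.inr h
    · exact absurd h hq
  have hle1 := le_pushf (f := fun z : X1 × X2 × Y1 => z.1) hP.1.1 z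
  have hle2 := le_pushf (f := fun z : X1 × X2 × Y1 => z.2.1) hP.1.1 z
  rw [hP.2.1] at hle1
  rw [hP.2.2] at hle2
  rcases hor with h | h
  · exact le_antisymm (h ▸ hle1) (hP.1.1 z)
  · exact le_antisymm (h ▸ hle2) (hP.1.1 z)

include hq_pos hq_sum hQ1 hQ2 in
lemma dD_nonneg (hP : P ∈ Kset Q1 Q2) : 0 ≤ dD q1 Q1 Q2 P :=
  gibbs_nonneg hP.1 (pst_pmf hq_pos hq_sum hQ1 hQ2) (pst_supp hq_pos hP)

include hq_pos hq_sum hQ1 hQ2 in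
lemma dD_pos (hP : P ∈ Kset Q1 Q2) (hne : P ≠ Pst q1 Q1 Q2) : 0 < dD q1 Q1 Q2 P :=
  gibbs_pos hP.1 (pst_pmf hq_pos hq_sum hQ1 hQ2) (pst_supp hq_pos hP) hne

include hq_pos in
lemma sum_logq (hP : P ∈ Kset Q1 Q2) :
    ∑ z, P z * Real.log (q1 z.1 z.2.1 z.2.2)
      = -(dD q1 Q1 Q2 P) - eF P + e1 P + e2 P := by
  have hnn := hP.1.1
  have hEF : eF P = -∑ z, P z * Real.log (P z) := by
    unfold eF entH
    congr 1
    refine Finset.sum_congr rfl fun a _ => ?_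
    rw [pushf_id]
  have hE1 : e1 P = -∑ z, P z * Real.log (Q1 z.1) := by
    have hs := pushf_sum (P := P) (f := fun z : X1 × X2 × Y1 => z.1)
      (φ := fun a => Real.log (Q1 a))
    rw [hP.2.1] at hs
    unfold e1 entH
    rw [hP.2.1, hs]
  have hE2 : e2 P = -∑ z, P z * Real.log (Q2 z.2.1) := by
    have hs := pushf_sum (P := P) (f := fun z : X1 × X2 × Y1 => z.2.1)
      (φ := fun a => Real.log (Q2 a))
    rw [hP.2.2] at hs
    unfold e2 entH
    rw [hP.2.2, hs]
  have hsplit : ∑ z, P z * Real.log (Pst q1 Q1 Q2 z)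
      = ∑ z, P z * (Real.log (Q1 z.1) + Real.log (Q2 z.2.1)
          + Real.log (q1 z.1 z.2.1 z.2.2)) := by
    refine Finset.sum_congr rfl fun z _ => ?_
    rcases eq_or_lt_of_le (hnn z) with h0 | h0
    · rw [← h0, zero_mul, zero_mul]
    · have hq1 : Q1 z.1 ≠ 0 := by
        have hle := le_pushf (f := fun z : X1 × X2 × Y1 => z.1) hnn z
        rw [hP.2.1] at hle
        exact (lt_of_lt_of_le h0 hle).ne'
      have hq2 : Q2 z.2.1 ≠ 0 := by
        have hle := le_pushf (f := fun z : X1 × X2 × Y1 => z.2.1) hnn z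
        rw [hP.2.2] at hle
        exact (lt_of_lt_of_le h0 hle).ne'
      have hq3 : q1 z.1 z.2.1 z.2.2 ≠ 0 := (hq_pos _ _ _).ne'
      rw [show Pst q1 Q1 Q2 z = Q1 z.1 * Q2 z.2.1 * q1 z.1 z.2.1 z.2.2 from rfl,
        Real.log_mul (mul_ne_zero hq1 hq2) hq3, Real.log_mul hq1 hq2]
  have hdd : dD q1 Q1 Q2 P
      = ∑ z, P z * Real.log (P z) - ∑ z, P z * Real.log (Pst q1 Q1 Q2 z) := by
    unfold dD
    rw [← Finset.sum_sub_distrib]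
    exact Finset.sum_congr rfl fun z _ => by ring
  have hexp : ∑ z, P z * (Real.log (Q1 z.1) + Real.log (Q2 z.2.1)
        + Real.log (q1 z.1 z.2.1 z.2.2))
      = (∑ z, P z * Real.log (Q1 z.1)) + (∑ z, P z * Real.log (Q2 z.2.1))
        + (∑ z, P z * Real.log (q1 z.1 z.2.1 z.2.2)) := by
    rw [← Finset.sum_add_distrib, ← Finset.sum_add_distrib]
    exact Finset.sum_congr rfl fun z _ => by ring
  linarith [hdd, hsplit, hexp, hEF, hE1, hE2]

include hq_pos hq_sum hQ1 hQ2 in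
lemma phi1_pst (R2 : ℝ) : phi1 R2 (Pst q1 Q1 Q2)
    = mutI (Pst q1 Q1 Q2) (fun z => z.1) (fun z => z.2.2)
      + max (condMutI (Pst q1 Q1 Q2) (fun z => z.2.1) (fun z => z.2.2)
          (fun z => z.1) - R2) 0 := by
  have hnn := pst_nonneg hq_pos hQ1 hQ2 (q1 := q1)
  rw [mutI13_eq hnn, condMutI231_eq hnn, e12_pst hq_pos hq_sum hQ1 hQ2]
  unfold phi1
  congr 2 <;> ring

include hq_pos hq_sum hQ1 hQ2 in
lemma phi2_pst : phi2 (Pst q1 Q1 Q2)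
    = condMutI (Pst q1 Q1 Q2) (fun z => z.1) (fun z => z.2.2) (fun z => z.2.1) := by
  have hnn := pst_nonneg hq_pos hQ1 hQ2 (q1 := q1)
  rw [condMutI132_eq hnn, e12_pst hq_pos hq_sum hQ1 hQ2]
  unfold phi2
  ring

lemma cont_phi1 (R2 : ℝ) : Continuous fun P : X1 × X2 × Y1 → ℝ => phi1 R2 P := by
  unfold phi1 e1 e2 e3 e13 eF
  exact (((continuous_entH _).add (continuous_entH _)).sub (continuous_entH _)).add
    ((((((continuous_entH _).add (continuous_entH _)).sub
      (continuous_entH _)).sub continuous_const)).max continuous_const)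

lemma cont_phi2 : Continuous fun P : X1 × X2 × Y1 → ℝ => phi2 P := by
  unfold phi2 e1 e23 eF
  exact ((continuous_entH _).add (continuous_entH _)).sub (continuous_entH _)

lemma cont_dD : Continuous fun P : X1 × X2 × Y1 → ℝ => dD q1 Q1 Q2 P := by
  unfold dD
  refine continuous_finset_sum _ fun z _ => ?_
  have h : (fun P : X1 × X2 × Y1 → ℝ =>
        P z * (Real.log (P z) - Real.log (Pst q1 Q1 Q2 z)))
      = fun P => P z * Real.log (P z) - Real.log (Pst q1 Q1 Q2 z) * P z := by
    funext P; ring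
  rw [h]
  exact (Real.continuous_mul_log.comp (continuous_apply z)).sub
    (continuous_const.mul (continuous_apply z))

lemma isClosed_Kset : IsClosed (Kset Q1 Q2 : Set (X1 × X2 × Y1 → ℝ)) := by
  have h1 : IsClosed {P : X1 × X2 × Y1 → ℝ | ∀ z, 0 ≤ P z} := by
    have he : {P : X1 × X2 × Y1 → ℝ | ∀ z, 0 ≤ P z} = ⋂ z, {P | 0 ≤ P z} := by
      ext P; simp [Set.mem_iInter]
    rw [he]
    exact isClosed_iInter fun z => isClosed_le continuous_const (continuous_apply z)
  have h2 : IsClosed {P : X1 × X2 × Y1 → ℝ | ∑ z, P z = 1} :=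
    isClosed_eq (continuous_finset_sum _ fun z _ => continuous_apply z) continuous_const
  have h3 : IsClosed {P : X1 × X2 × Y1 → ℝ | pushf P (fun z => z.1) = Q1} :=
    isClosed_eq (continuous_pi fun a => continuous_pushf _ a) continuous_const
  have h4 : IsClosed {P : X1 × X2 × Y1 → ℝ | pushf P (fun z => z.2.1) = Q2} :=
    isClosed_eq (continuous_pi fun a => continuous_pushf _ a) continuous_const
  have he : (Kset Q1 Q2 : Set (X1 × X2 × Y1 → ℝ))
      = ({P : X1 × X2 × Y1 → ℝ | ∀ z, 0 ≤ P z} ∩ {P | ∑ z, P z = 1})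
        ∩ ({P | pushf P (fun z => z.1) = Q1} ∩ {P | pushf P (fun z => z.2.1) = Q2}) := by
    ext P
    simp only [Kset, IsPMF, Set.mem_setOf_eq, Set.mem_inter_iff]
  rw [he]
  exact (h1.inter h2).inter (h3.inter h4)

lemma isCompact_Kset : IsCompact (Kset Q1 Q2 : Set (X1 × X2 × Y1 → ℝ)) := by
  refine IsCompact.of_isClosed_subset
    (isCompact_Icc (a := (0 : X1 × X2 × Y1 → ℝ)) (b := 1)) isClosed_Kset ?_
  intro P hP
  rw [Set.mem_Icc]
  constructor
  · intro z; exact hP.1.1 z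
  · intro z
    have hs := Finset.single_le_sum (f := P) (fun i _ => hP.1.1 i) (Finset.mem_univ z)
    rw [hP.1.2] at hs
    exact hs

include hq_pos in
lemma f1_bound {R2 ρ : ℝ} (hρ0 : 0 ≤ ρ) (hρ1 : ρ ≤ 1)
    (hP : P ∈ Kset Q1 Q2) (hP' : P' ∈ Kset Q1 Q2)
    (hY : pushf P (fun z => z.2.2) = pushf P' (fun z => z.2.2)) :
    (1 - ρ) * dD q1 Q1 Q2 P + ρ * dD q1 Q1 Q2 P' - R2 + ρ * phi1 R2 P
      ≤ f1Fun q1 R2 ρ 1 P P' := by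
  have hnn := hP.1.1
  have hnn' := hP'.1.1
  have hE3 : e3 P' = e3 P := (entH_congr hY).symm
  have hmaxgen : ∀ a : ℝ, (1 - ρ) * a + ρ * max a 0 ≤ max a ((1 - ρ) * a) := by
    intro a
    rcases le_total a 0 with h | h
    · rw [max_eq_right h]
      have : (1 - ρ) * a + ρ * 0 = (1 - ρ) * a := by ring
      rw [this]
      exact le_max_right _ _
    · rw [max_eq_left h]
      have : (1 - ρ) * a + ρ * a = a := by ring
      rw [this]
      exact le_max_left _ _
  rw [f1Fun, gFun, sum_logq hq_pos hP, sum_logq hq_pos hP',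
    condEnt13_eq hnn, mutI13_eq hnn', mutI2_13_eq hnn, mutI2_13_eq hnn', hE3, phi1]
  simp only [mul_one]
  have hmax1 : (1 - ρ) * (e2 P + e13 P - eF P - R2)
        + ρ * max (e2 P + e13 P - eF P - R2) 0
      ≤ max (e2 P + e13 P - eF P - R2) ((1 - ρ) * (e2 P + e13 P - eF P - R2)) :=
    hmaxgen _
  have hmax2 : ρ * (e2 P' + e13 P' - eF P' - R2)
      ≤ max (max ((1 - ρ) * mutI P' (fun z => z.2.1) (fun z => z.2.2)
          + ρ * (e2 P' + e13 P' - eF P') - R2) (ρ * (e2 P' + e13 P' - eF P' - R2)))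
        (ρ * (e2 P' + e13 P' - eF P' - R2)) := le_max_right _ _
  linarith [hmax1, hmax2]

include hq_pos in
lemma f2_bound {R2 ρ : ℝ}
    (hP : P ∈ Kset Q1 Q2) (hP' : P' ∈ Kset Q1 Q2)
    (h23 : pushf P (fun z => (z.2.1, z.2.2)) = pushf P' (fun z => (z.2.1, z.2.2))) :
    (1 - ρ) * dD q1 Q1 Q2 P + ρ * dD q1 Q1 Q2 P' - R2 + ρ * phi2 P
      ≤ f2Fun q1 R2 ρ 1 P P' := by
  have hnn := hP.1.1
  have hnn' := hP'.1.1
  have hE23 : e23 P' = e23 P := (entH_congr h23).symm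
  have hE1 : e1 P' = e1 P := (entH_congr (hP.2.1.trans hP'.2.1.symm)).symm
  have hE2 : e2 P' = e2 P := (entH_congr (hP.2.2.trans hP'.2.2.symm)).symm
  rw [f2Fun, gFun, sum_logq hq_pos hP, sum_logq hq_pos hP',
    condEnt13_eq hnn, mutI1_23_eq hnn', mutI2_13_eq hnn, hE23, hE1, hE2, phi2]
  linarith

end Main

end ST18

open ST18 in
/-- positivity of the optimized exponent inside the region `𝓡1`. Here
`P*` is the joint pmf `Q1 ⊗ Q2 ⊗ q1`. -/
theorem stmt18 {X1 X2 Y1 : Type*} [Fintype X1] [DecidableEq X1] [Fintype X2] [DecidableEq X2]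
    [Fintype Y1] [DecidableEq Y1]
    (q1 : X1 → X2 → Y1 → ℝ) (hq_pos : ∀ x1 x2 y, 0 < q1 x1 x2 y)
    (hq_sum : ∀ x1 x2, ∑ y, q1 x1 x2 y = 1)
    (R1 R2 : ℝ) (hR1 : 0 ≤ R1) (hR2 : 0 ≤ R2)
    (Q1 : X1 → ℝ) (Q2 : X2 → ℝ) (hQ1 : IsPMF Q1) (hQ2 : IsPMF Q2)
    (Pstar : X1 × X2 × Y1 → ℝ)
    (hPstar : Pstar = fun z => Q1 z.1 * Q2 z.2.1 * q1 z.1 z.2.1 z.2.2)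
    (h1 : R1 < mutI Pstar (fun z => z.1) (fun z => z.2.2)
      + max (condMutI Pstar (fun z => z.2.1) (fun z => z.2.2) (fun z => z.1) - R2) 0)
    (h2 : R1 < condMutI Pstar (fun z => z.1) (fun z => z.2.2) (fun z => z.2.1)) :
    0 < ⨆ ρ : Set.Icc (0 : ℝ) 1, ⨆ lam : Set.Icc (0 : ℝ) 1,
        ER1 q1 R1 R2 Q1 Q2 (ρ : ℝ) (lam : ℝ) := by
  have hPsteq : Pstar = Pst q1 Q1 Q2 := hPstar
  rw [hPsteq] at h1 h2
  clear hPstar hPsteq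
  have hPstK : Pst q1 Q1 Q2 ∈ Kset Q1 Q2 := pst_mem_K hq_pos hq_sum hQ1 hQ2
  have hδ1 : R1 < phi1 R2 (Pst q1 Q1 Q2) := by
    rw [phi1_pst hq_pos hq_sum hQ1 hQ2]; exact h1
  have hδ2 : R1 < phi2 (Pst q1 Q1 Q2) := by
    rw [phi2_pst hq_pos hq_sum hQ1 hQ2]; exact h2
  set δ : ℝ := min (phi1 R2 (Pst q1 Q1 Q2) - R1) (phi2 (Pst q1 Q1 Q2) - R1) with hδdef
  have hδpos : 0 < δ := lt_min (by linarith) (by linarith)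
  have hδle1 : δ ≤ phi1 R2 (Pst q1 Q1 Q2) - R1 := min_le_left _ _
  have hδle2 : δ ≤ phi2 (Pst q1 Q1 Q2) - R1 := min_le_right _ _
  set C : Set (X1 × X2 × Y1 → ℝ) := Kset Q1 Q2 ∩
    ((fun P => phi1 R2 P) ⁻¹' Set.Iic (R1 + δ/2) ∪
      (fun P => phi2 P) ⁻¹' Set.Iic (R1 + δ/2)) with hCdef
  have hCcomp : IsCompact C :=
    (isCompact_Kset).inter_right
      ((isClosed_Iic.preimage (cont_phi1 R2)).union (isClosed_Iic.preimage cont_phi2))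
  have hPstNotC : Pst q1 Q1 Q2 ∉ C := by
    rintro ⟨-, hm | hm⟩
    · simp only [Set.mem_preimage, Set.mem_Iic] at hm
      linarith
    · simp only [Set.mem_preimage, Set.mem_Iic] at hm
      linarith
  obtain ⟨m, hm0, hmle⟩ : ∃ m : ℝ, 0 < m ∧ ∀ P ∈ C, m ≤ dD q1 Q1 Q2 P := by
    rcases C.eq_empty_or_nonempty with hE | hNE
    · exact ⟨1, one_pos, fun P hP => by rw [hE] at hP; exact absurd hP (Set.notMem_empty P)⟩
    · obtain ⟨P0, hP0C, hP0min⟩ := hCcomp.exists_isMinOn hNE (cont_dD).continuousOn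
      refine ⟨dD q1 Q1 Q2 P0, ?_, fun P hP => hP0min hP⟩
      have hne : P0 ≠ Pst q1 Q1 Q2 := fun h => hPstNotC (h ▸ hP0C)
      exact dD_pos hq_pos hq_sum hQ1 hQ2 hP0C.1 hne
  obtain ⟨M, hM0, hMb⟩ : ∃ M : ℝ, 0 ≤ M ∧
      ∀ P ∈ Kset Q1 Q2, -M ≤ phi1 R2 P ∧ -M ≤ phi2 P := by
    have hKne : (Kset Q1 Q2 : Set (X1 × X2 × Y1 → ℝ)).Nonempty := ⟨_, hPstK⟩
    obtain ⟨Pa, hPa, hPamin⟩ :=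
      isCompact_Kset.exists_isMinOn hKne (cont_phi1 R2).continuousOn
    obtain ⟨Pb, hPb, hPbmin⟩ :=
      isCompact_Kset.exists_isMinOn hKne (cont_phi2).continuousOn
    refine ⟨max 0 (max (-(phi1 R2 Pa)) (-(phi2 Pb))), le_max_left _ _, fun P hP => ⟨?_, ?_⟩⟩
    · have h : phi1 R2 Pa ≤ phi1 R2 P := hPamin hP
      have h' : -(phi1 R2 Pa) ≤ max 0 (max (-(phi1 R2 Pa)) (-(phi2 Pb))) :=
        le_max_of_le_right (le_max_left _ _)
      linarith
    · have h : phi2 Pb ≤ phi2 P := hPbmin hP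
      have h' : -(phi2 Pb) ≤ max 0 (max (-(phi1 R2 Pa)) (-(phi2 Pb))) :=
        le_max_of_le_right (le_max_right _ _)
      linarith
  set ρ : ℝ := min (1/2) (m / (2*(M + R1 + δ/2 + 1))) with hρdef
  have hden : 0 < M + R1 + δ/2 + 1 := by linarith
  have hρ0 : 0 < ρ := lt_min (by norm_num) (div_pos hm0 (by linarith))
  have hρh : ρ ≤ 1/2 := min_le_left _ _
  have hρ1 : ρ ≤ 1 := le_trans hρh (by norm_num)
  have hρm : ρ * (M + R1 + δ/2 + 1) ≤ m/2 := by
    have h := min_le_right (1/2 : ℝ) (m / (2*(M + R1 + δ/2 + 1)))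
    calc ρ * (M + R1 + δ/2 + 1)
        ≤ (m / (2*(M + R1 + δ/2 + 1))) * (M + R1 + δ/2 + 1) :=
          mul_le_mul_of_nonneg_right h (by linarith)
      _ = m/2 := by field_simp
  have key : ∀ P ∈ Kset Q1 Q2, ∀ φ : ℝ, -M ≤ φ →
      (R1 + δ/2 < φ ∨ m ≤ dD q1 Q1 Q2 P) →
      ρ*δ/2 ≤ (1-ρ) * dD q1 Q1 Q2 P + ρ * (φ - R1) := by
    intro P hP φ hφM hcase
    have hD0 : 0 ≤ dD q1 Q1 Q2 P := dD_nonneg hq_pos hq_sum hQ1 hQ2 hP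
    rcases hcase with h | h
    · have h2' : ρ * (δ/2) ≤ ρ * (φ - R1) := mul_le_mul_of_nonneg_left (by linarith) hρ0.le
      have h3' : 0 ≤ (1-ρ) * dD q1 Q1 Q2 P := mul_nonneg (by linarith) hD0
      linarith
    · have t1 : (1/2)*m ≤ (1-ρ)*dD q1 Q1 Q2 P := by
        have := mul_le_mul (le_refl (1-ρ)) h hm0.le (by linarith : (0:ℝ) ≤ 1-ρ)
        nlinarith
      have t2 : ρ * (-M - R1) ≤ ρ * (φ - R1) := mul_le_mul_of_nonneg_left (by linarith) hρ0.le
      nlinarith [hρm, t1, t2, hρ0.le]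
  have hcR : ρ*δ/2 - R2 + ρ*R1 = ρ*δ/2 - R2 + ρ*R1 := rfl
  have hb1 : ∀ PP : S1set Y1 Q1 Q2, ρ*δ/2 - R2 + ρ*R1 ≤ f1Fun q1 R2 ρ 1 PP.1.1 PP.1.2 := by
    rintro ⟨⟨P, P'⟩, hp1, hp2, hy, hm1, hm1', hm2, hm2'⟩
    have hPK : P ∈ Kset Q1 Q2 := ⟨hp1, hm1, hm2⟩
    have hP'K : P' ∈ Kset Q1 Q2 := ⟨hp2, hm1', hm2'⟩
    have hf := f1_bound hq_pos (R2 := R2) hρ0.le hρ1 hPK hP'K hy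
    have hφM := (hMb P hPK).1
    have hcase : R1 + δ/2 < phi1 R2 P ∨ m ≤ dD q1 Q1 Q2 P := by
      by_cases hc : R1 + δ/2 < phi1 R2 P
      · exact Or.inl hc
      · exact Or.inr (hmle P ⟨hPK, Or.inl (Set.mem_Iic.mpr (not_lt.mp hc))⟩)
    have hk := key P hPK _ hφM hcase
    have hD' : 0 ≤ dD q1 Q1 Q2 P' := dD_nonneg hq_pos hq_sum hQ1 hQ2 hP'K
    have hD'' : 0 ≤ ρ * dD q1 Q1 Q2 P' := mul_nonneg hρ0.le hD'
    simp only []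
    linarith [hk, hf, hD'']
  have hb2 : ∀ PP : S2set Y1 Q1 Q2 R2, ρ*δ/2 - R2 + ρ*R1 ≤ f2Fun q1 R2 ρ 1 PP.1.1 PP.1.2 := by
    rintro ⟨⟨P, P'⟩, hp1, hp2, hm1, hm1', hm2, hm2', hR2le, h23⟩
    have hPK : P ∈ Kset Q1 Q2 := ⟨hp1, hm1, hm2⟩
    have hP'K : P' ∈ Kset Q1 Q2 := ⟨hp2, hm1', hm2'⟩
    have hf := f2_bound hq_pos (ρ := ρ) (R2 := R2) hPK hP'K h23
    have hφM := (hMb P hPK).2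
    have hcase : R1 + δ/2 < phi2 P ∨ m ≤ dD q1 Q1 Q2 P := by
      by_cases hc : R1 + δ/2 < phi2 P
      · exact Or.inl hc
      · exact Or.inr (hmle P ⟨hPK, Or.inr (Set.mem_Iic.mpr (not_lt.mp hc))⟩)
    have hk := key P hPK _ hφM hcase
    have hD' : 0 ≤ dD q1 Q1 Q2 P' := dD_nonneg hq_pos hq_sum hQ1 hQ2 hP'K
    have hD'' : 0 ≤ ρ * dD q1 Q1 Q2 P' := mul_nonneg hρ0.le hD'
    simp only []
    linarith [hk, hf, hD'']
  have hER : (((ρ*δ/2 : ℝ)) : EReal) ≤ ER1 q1 R1 R2 Q1 Q2 ρ 1 := by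
    rw [ER1]
    have hi1 : ((ρ*δ/2 - R2 + ρ*R1 : ℝ) : EReal)
        ≤ ⨅ PP : S1set Y1 Q1 Q2, ((f1Fun q1 R2 ρ 1 PP.1.1 PP.1.2 : ℝ) : EReal) :=
      le_iInf fun PP => EReal.coe_le_coe_iff.mpr (hb1 PP)
    have hi2 : ((ρ*δ/2 - R2 + ρ*R1 : ℝ) : EReal)
        ≤ ⨅ PP : S2set Y1 Q1 Q2 R2, ((f2Fun q1 R2 ρ 1 PP.1.1 PP.1.2 : ℝ) : EReal) :=
      le_iInf fun PP => EReal.coe_le_coe_iff.mpr (hb2 PP)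
    have hmin := le_min hi1 hi2
    have hceq : (ρ*δ/2 : ℝ) = (R2 - ρ*R1) + (ρ*δ/2 - R2 + ρ*R1) := by ring
    calc ((ρ*δ/2 : ℝ) : EReal)
        = (((R2 - ρ*R1) + (ρ*δ/2 - R2 + ρ*R1) : ℝ) : EReal) := by rw [← hceq]
      _ = ((R2 - ρ*R1 : ℝ) : EReal) + ((ρ*δ/2 - R2 + ρ*R1 : ℝ) : EReal) := EReal.coe_add _ _
      _ ≤ _ := add_le_add le_rfl hmin
  have hpos : (0 : EReal) < ((ρ*δ/2 : ℝ) : EReal) :=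
    EReal.coe_pos.mpr (by positivity)
  refine lt_of_lt_of_le (lt_of_lt_of_le hpos hER) ?_
  have hρmem : ρ ∈ Set.Icc (0:ℝ) 1 := ⟨hρ0.le, hρ1⟩
  have h1mem : (1:ℝ) ∈ Set.Icc (0:ℝ) 1 := ⟨zero_le_one, le_refl 1⟩
  exact le_iSup_of_le ⟨ρ, hρmem⟩ (le_iSup_of_le ⟨1, h1mem⟩ le_rfl)
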